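/- Suppose 0 < β < 1/(2N+1), and let Γ_t = ⋃_{j=0}^m (Γ + t_j) be a self-similar set, where t = (t_0, t_1, …, t_m) ∈ ℝ^{m+1} with 0 = t_0 < t_1 < … < t_m. If r·Γ_t + b ⊆ Γ_t for some reals r, b with 0 < |r| < 1, then |r| = β^q for some q ∈ ℤ_+. -/
import Mathlib


noncomputable section

namespace HSCantor

/-- A `D`-coding of `x`: a digit sequence `c` with digits in `D ⊆ ℤ` such that
`x = (1-β)/N · Σ_{k=1}^∞ c_k β^{k-1}` (here indexed from `k = 0`). -/
def IsCoding (N : ℕ) (β : ℝ) (D : Set ℤ) (x : ℝ) (c : ℕ → ℤ) : Prop :=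
  (∀ k, c k ∈ D) ∧ x = (1 - β) / N * ∑' k : ℕ, (c k : ℝ) * β ^ k

/-- The set `Γ_{β,D}` for a digit set `D ⊆ ℤ`. -/
def cantorD (N : ℕ) (β : ℝ) (D : Set ℤ) : Set ℝ := { x | ∃ c, IsCoding N β D x c }

/-- The homogeneous symmetric Cantor set `Γ = Γ_{β,{0,1,…,N}}`. -/
def Gamma (N : ℕ) (β : ℝ) : Set ℝ := cantorD N β (Set.Icc 0 (N : ℤ))

/-- `E ⊆ ℝ` is a self-similar set: it is nonempty, compact, and is the union of its
images under finitely many contracting similitudes `x ↦ r x + b`, `0 < |r| < 1`. -/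
def IsSelfSimilar (E : Set ℝ) : Prop :=
  E.Nonempty ∧ IsCompact E ∧ ∃ F : Finset (ℝ × ℝ),
    (∀ p ∈ F, 0 < |p.1| ∧ |p.1| < 1) ∧
    E = ⋃ p ∈ F, (fun x => p.1 * x + p.2) '' E

/-- `Γ_t = ⋃_{j=0}^m (Γ + t_j)`. -/
def GammaT (N : ℕ) (β : ℝ) {m : ℕ} (t : Fin (m + 1) → ℝ) : Set ℝ :=
  ⋃ j, (fun x => x + t j) '' Gamma N β

/-- The set `T = ⋃_{n≥1} { (1-β)/N · Σ_{k=1}^n j_k β^{-k} : j_k ∈ {0,…,N} }`. -/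
def Tset (N : ℕ) (β : ℝ) : Set ℝ :=
  { x | ∃ n : ℕ, 1 ≤ n ∧ ∃ c : ℕ → ℕ, (∀ k, c k ≤ N) ∧
      x = (1 - β) / N * ∑ k ∈ Finset.Icc 1 n, (c k : ℝ) * β ^ (-(k : ℤ)) }

/-- `d` is a digit representation of the translation vector `t` with `τ` digits:
`t_j = (1-β)/N · Σ_{k=1}^τ d_{j,k} β^{-k}` with all digits in `{0,…,N}`. -/
def IsDigitRep (N : ℕ) (β : ℝ) {m : ℕ} (t : Fin (m + 1) → ℝ) (τ : ℕ)
    (d : Fin (m + 1) → ℕ → ℕ) : Prop :=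
  (∀ j k, d j k ≤ N) ∧
    ∀ j, t j = (1 - β) / N * ∑ k ∈ Finset.Icc 1 τ, (d j k : ℝ) * β ^ (-(k : ℤ))

/-- `d` is a digit representation of `t` with `τ = τ_t` digits, `τ_t` minimal. -/
def IsMinimalRep (N : ℕ) (β : ℝ) {m : ℕ} (t : Fin (m + 1) → ℝ) (τ : ℕ)
    (d : Fin (m + 1) → ℕ → ℕ) : Prop :=
  IsDigitRep N β t τ d ∧ ∀ τ' < τ, ∀ d', ¬ IsDigitRep N β t τ' d'

/-- `s_k = max_{0 ≤ j ≤ m} t_{j,k}`. -/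
def digitSup {m : ℕ} (d : Fin (m + 1) → ℕ → ℕ) (k : ℕ) : ℕ :=
  Finset.univ.sup fun j => d j k

/-- Words of length `n` over the alphabet `{0,1,…,N}`, as lists of naturals. -/
def Words (N n : ℕ) : Set (List ℕ) := { w | w.length = n ∧ ∀ x ∈ w, x ≤ N }

/-- `Ω_t^n`: words `i_1 … i_n ∈ {0,…,N}^n` with `i_{n+1-k} ≤ N - s_k` for `1 ≤ k ≤ τ`.
(A list `w = [i_1, …, i_n]` satisfies `i_{n+1-k} = w.getD (n-k) 0`.) -/
def Omega (N τ : ℕ) (s : ℕ → ℕ) (n : ℕ) : Set (List ℕ) :=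
  { w | w ∈ Words N n ∧ ∀ k, 1 ≤ k → k ≤ τ → w.getD (n - k) 0 + s k ≤ N }

/-- `Ω̂_t^n`: words `i_1 … i_n ∈ {0,…,N}^n` with `i_{n+1-k} ≥ s_k` for `1 ≤ k ≤ τ`. -/
def OmegaHat (N τ : ℕ) (s : ℕ → ℕ) (n : ℕ) : Set (List ℕ) :=
  { w | w ∈ Words N n ∧ ∀ k, 1 ≤ k → k ≤ τ → s k ≤ w.getD (n - k) 0 }

/-- `W_t^τ = A_t^τ ∪ Â_t^τ`: words obtained from a word in `Ω_t^τ` (resp. `Ω̂_t^τ`)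
by adding (resp. subtracting) the digits of some `t_j` to the last `τ` positions. -/
def Wset (N : ℕ) {m : ℕ} (τ : ℕ) (d : Fin (m + 1) → ℕ → ℕ) : Set (List ℕ) :=
  { v | ∃ w ∈ Omega N τ (digitSup d) τ, ∃ j : Fin (m + 1),
      v = List.ofFn fun idx : Fin τ => w.getD idx 0 + d j (τ - (idx : ℕ)) } ∪
  { v | ∃ w ∈ OmegaHat N τ (digitSup d) τ, ∃ j : Fin (m + 1),
      v = List.ofFn fun idx : Fin τ => w.getD idx 0 - d j (τ - (idx : ℕ)) }

/-- The symbolic admissibility condition: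
`⋃_{n=τ}^ℓ {0,…,N}^{n-τ} × W_t^τ × {0,…,N}^{ℓ-n} = {0,…,N}^ℓ` for some `ℓ ≥ τ`. -/
def AdmissibleWith (N : ℕ) {m : ℕ} (τ : ℕ) (d : Fin (m + 1) → ℕ → ℕ) : Prop :=
  ∃ ℓ, τ ≤ ℓ ∧
    (⋃ n ∈ Finset.Icc τ ℓ,
      { z : List ℕ | ∃ u ∈ Words N (n - τ), ∃ w ∈ Wset N τ d, ∃ v ∈ Words N (ℓ - n),
          z = u ++ w ++ v }) = Words N ℓ

/-- `t` is an admissible translation vector. -/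
def IsAdmissible (N : ℕ) (β : ℝ) {m : ℕ} (t : Fin (m + 1) → ℝ) : Prop :=
  (∀ j, t j ∈ Tset N β) ∧
    ∃ τ d, IsMinimalRep N β t τ d ∧ AdmissibleWith N τ d

/-- The vertex set `V_t = {0,…,N}^τ \ W_t^τ` of the directed graph `G_t`. -/
def Vset (N : ℕ) {m : ℕ} (τ : ℕ) (d : Fin (m + 1) → ℕ → ℕ) : Set (List ℕ) :=
  Words N τ \ Wset N τ d

/-- The graph on `V` with an edge `i → j` iff `i_2 … i_τ = j_1 … j_{τ-1}` has a cycle: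
a directed path of positive length starting and ending at the same vertex. -/
def HasCycle (V : Set (List ℕ)) : Prop :=
  ∃ (L : ℕ) (p : ℕ → List ℕ), 0 < L ∧ (∀ i ≤ L, p i ∈ V) ∧
    (∀ i < L, (p i).drop 1 = (p (i + 1)).dropLast) ∧ p 0 = p L

open Classical in
/-- The adjacency matrix of the directed graph `G_t`, indexed by all words of length `τ`
over `{0,…,N}`; its `(i,j)` entry is `1` exactly when `i, j ∈ V_t` and there is a
directed edge `i → j`, and the rows and columns outside `V_t` are zero. -/
def adjMat (N τ : ℕ) (V : Set (List ℕ)) :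
    Matrix (Fin τ → Fin (N + 1)) (Fin τ → Fin (N + 1)) ℕ :=
  fun i j =>
    if (List.ofFn fun k => (i k : ℕ)) ∈ V ∧ (List.ofFn fun k => (j k : ℕ)) ∈ V ∧
        (List.ofFn fun k => (i k : ℕ)).drop 1 = (List.ofFn fun k => (j k : ℕ)).dropLast
    then 1 else 0

/-- `φ_i(x) = βx + i(1-β)/N`. -/
def phi (N : ℕ) (β : ℝ) (i : ℕ) (x : ℝ) : ℝ := β * x + i * (1 - β) / N

/-- `φ_{i_1 … i_n} = φ_{i_1} ∘ ⋯ ∘ φ_{i_n}`. -/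
def phiWord (N : ℕ) (β : ℝ) (w : List ℕ) (x : ℝ) : ℝ := w.foldr (phi N β) x

/-- The conjugate translation vector `t̂_j = t_m - t_{m-j}`. -/
def conj {m : ℕ} (t : Fin (m + 1) → ℝ) : Fin (m + 1) → ℝ :=
  fun j => t (Fin.last m) - t ⟨m - (j : ℕ), Nat.lt_succ_of_le (Nat.sub_le m j)⟩


section AuxProofs

variable {N : ℕ} {β : ℝ}

private lemma gamma_summable (hβ0 : 0 < β) (hb1 : β < 1) {c : ℕ → ℤ}
    (hc : ∀ k, c k ∈ Set.Icc (0:ℤ) (N:ℤ)) :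
    Summable fun k => (c k : ℝ) * β ^ k := by
  refine Summable.of_nonneg_of_le (fun k => ?_) (fun k => ?_)
    ((summable_geometric_of_lt_one hβ0.le hb1).mul_left (N:ℝ))
  · exact mul_nonneg (by exact_mod_cast (hc k).1) (pow_nonneg hβ0.le k)
  · refine mul_le_mul_of_nonneg_right ?_ (pow_nonneg hβ0.le k)
    exact_mod_cast (hc k).2

private lemma geom_summable (hβ0 : 0 < β) (hb1 : β < 1) :
    Summable fun k : ℕ => (N : ℝ) * β ^ k :=
  (summable_geometric_of_lt_one hβ0.le hb1).mul_left (N:ℝ)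

private lemma key_one (hN : 0 < N) (hβ0 : 0 < β) (hb1 : β < 1) :
    (1 - β)/(N:ℝ) * ((N:ℝ) * (1 - β)⁻¹) = 1 := by
  have hN0 : (N:ℝ) ≠ 0 := by positivity
  have hne : (1:ℝ) - β ≠ 0 := by linarith
  field_simp

private lemma Gamma_bounds (hN : 0 < N) (hβ0 : 0 < β) (hb1 : β < 1) {x : ℝ}
    (hx : x ∈ Gamma N β) : 0 ≤ x ∧ x ≤ 1 := by
  obtain ⟨c, hc, rfl⟩ := hx
  have hN0 : (0:ℝ) < N := by exact_mod_cast hN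
  have hA0 : (0:ℝ) ≤ (1 - β)/N := div_nonneg (by linarith) hN0.le
  have hsum := gamma_summable (N := N) hβ0 hb1 hc
  constructor
  · refine mul_nonneg hA0 (tsum_nonneg fun k => ?_)
    exact mul_nonneg (by exact_mod_cast (hc k).1) (pow_nonneg hβ0.le k)
  · have hle : ∑' k : ℕ, (c k : ℝ) * β ^ k ≤ ∑' k : ℕ, (N : ℝ) * β ^ k := by
      refine Summable.tsum_le_tsum (fun k => ?_) hsum (geom_summable hβ0 hb1)
      exact mul_le_mul_of_nonneg_right (by exact_mod_cast (hc k).2) (pow_nonneg hβ0.le k)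
    have hgeom : ∑' k : ℕ, (N : ℝ) * β ^ k = (N : ℝ) * (1 - β)⁻¹ := by
      rw [tsum_mul_left, tsum_geometric_of_lt_one hβ0.le hb1]
    calc (1 - β)/N * ∑' k : ℕ, (c k : ℝ) * β ^ k
        ≤ (1 - β)/N * ((N:ℝ) * (1 - β)⁻¹) := by
          rw [← hgeom]; exact mul_le_mul_of_nonneg_left hle hA0
      _ = 1 := key_one hN hβ0 hb1

private lemma zero_mem_Gamma : (0:ℝ) ∈ Gamma N β := by
  refine ⟨fun _ => 0, fun k => ⟨le_refl _, by positivity⟩, ?_⟩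
  simp

private lemma one_mem_Gamma (hN : 0 < N) (hβ0 : 0 < β) (hb1 : β < 1) :
    (1:ℝ) ∈ Gamma N β := by
  refine ⟨fun _ => (N:ℤ), fun k => ⟨by positivity, le_refl _⟩, ?_⟩
  push_cast
  rw [tsum_mul_left, tsum_geometric_of_lt_one hβ0.le hb1]
  exact (key_one hN hβ0 hb1).symm

private lemma phi_mem (hβ0 : 0 < β) (hb1 : β < 1) {i : ℕ} (hi : i ≤ N) {x : ℝ}
    (hx : x ∈ Gamma N β) : phi N β i x ∈ Gamma N β := by
  obtain ⟨c, hc, rfl⟩ := hx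
  have hmem : ∀ k, (Nat.casesOn k (i:ℤ) c : ℤ) ∈ Set.Icc (0:ℤ) (N:ℤ) := by
    intro k
    cases k with
    | zero =>
      refine ⟨?_, ?_⟩
      · show (0:ℤ) ≤ (i:ℤ); positivity
      · show (i:ℤ) ≤ (N:ℤ); exact_mod_cast hi
    | succ k => exact hc k
  refine ⟨fun k => Nat.casesOn k (i:ℤ) c, hmem, ?_⟩
  have hsum : Summable fun k => ((Nat.casesOn k (i:ℤ) c : ℤ) : ℝ) * β ^ k :=
    gamma_summable hβ0 hb1 hmem
  rw [Summable.tsum_eq_zero_add hsum]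
  have h2 : ∑' k : ℕ, ((Nat.casesOn (k+1) (i:ℤ) c : ℤ) : ℝ) * β ^ (k+1)
      = β * ∑' k : ℕ, (c k : ℝ) * β ^ k := by
    rw [← tsum_mul_left]
    exact tsum_congr fun k => by ring
  rw [h2]
  have hf0 : ((Nat.casesOn 0 (i:ℤ) c : ℤ) : ℝ) * β ^ 0 = (i:ℝ) := by
    show ((i:ℤ):ℝ) * β ^ 0 = (i:ℝ); push_cast; ring
  rw [hf0]
  show phi N β i ((1 - β) / N * ∑' (k : ℕ), (c k:ℝ) * β ^ k) = _
  unfold phi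
  ring

private lemma Gamma_peel (hβ0 : 0 < β) (hb1 : β < 1) {x : ℝ} (hx : x ∈ Gamma N β) :
    ∃ i : ℕ, i ≤ N ∧ ∃ y ∈ Gamma N β, x = phi N β i y := by
  obtain ⟨c, hc, rfl⟩ := hx
  have h0 : ((c 0).toNat : ℤ) = c 0 := Int.toNat_of_nonneg (hc 0).1
  refine ⟨(c 0).toNat, ?_, (1 - β)/N * ∑' k : ℕ, (c (k+1) : ℝ) * β ^ k,
    ⟨fun k => c (k+1), fun k => hc (k+1), rfl⟩, ?_⟩
  · have := (hc 0).2
    omega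
  · have hsum := gamma_summable (N := N) hβ0 hb1 hc
    rw [Summable.tsum_eq_zero_add hsum]
    have h2 : ∑' k : ℕ, (c (k+1) : ℝ) * β ^ (k+1) = β * ∑' k : ℕ, (c (k+1) : ℝ) * β ^ k := by
      rw [← tsum_mul_left]
      exact tsum_congr fun k => by ring
    rw [h2]
    have h3 : (((c 0).toNat : ℕ) : ℝ) = ((c 0 : ℤ) : ℝ) := by exact_mod_cast h0
    unfold phi
    rw [h3]
    ring

private lemma one_sub_mem (hN : 0 < N) (hβ0 : 0 < β) (hb1 : β < 1) {x : ℝ}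
    (hx : x ∈ Gamma N β) : 1 - x ∈ Gamma N β := by
  obtain ⟨c, hc, rfl⟩ := hx
  refine ⟨fun k => (N:ℤ) - c k, fun k => ⟨?_, ?_⟩, ?_⟩
  · show (0:ℤ) ≤ (N:ℤ) - c k
    have := (hc k).2; omega
  · show (N:ℤ) - c k ≤ (N:ℤ)
    have := (hc k).1; omega
  · have hsum := gamma_summable (N := N) hβ0 hb1 hc
    have hgsum := geom_summable (N := N) hβ0 hb1
    have h1 : ∑' k : ℕ, (((N:ℤ) - c k : ℤ) : ℝ) * β ^ k
        = ∑' k : ℕ, ((N:ℝ) * β ^ k - (c k : ℝ) * β ^ k) := by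
      exact tsum_congr fun k => by push_cast; ring
    rw [h1, Summable.tsum_sub hgsum hsum, tsum_mul_left, tsum_geometric_of_lt_one hβ0.le hb1,
      mul_sub, key_one hN hβ0 hb1]


private lemma beta_facts (hN : 0 < N) (hβ0 : 0 < β) (hβ1 : β < 1 / (2 * N + 1)) :
    β < 1 ∧ 2 * β < (1 - β)/N ∧ (N:ℝ) * ((1 - β)/N) = 1 - β := by
  have hN1 : (1:ℝ) ≤ N := by exact_mod_cast hN
  have h2N : (0:ℝ) < 2 * N + 1 := by positivity
  have hmul : β * (2 * N + 1) < 1 := by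
    calc β * (2*N+1) < 1 / (2 * (N:ℝ) + 1) * (2*N+1) := mul_lt_mul_of_pos_right hβ1 h2N
      _ = 1 := by field_simp
  have hb1 : β < 1 := by nlinarith
  refine ⟨hb1, ?_, ?_⟩
  · rw [lt_div_iff₀ (by linarith : (0:ℝ) < N)]
    nlinarith
  · field_simp

private lemma mem_cyl (hN : 0 < N) (hβ0 : 0 < β) (hb1 : β < 1) {x : ℝ}
    (hx : x ∈ Gamma N β) :
    ∃ i : ℕ, i ≤ N ∧ (i:ℝ) * ((1 - β)/N) ≤ x ∧ x ≤ (i:ℝ) * ((1 - β)/N) + β := by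
  obtain ⟨i, hi, y, hy, rfl⟩ := Gamma_peel hβ0 hb1 hx
  obtain ⟨hy0, hy1⟩ := Gamma_bounds hN hβ0 hb1 hy
  have h1 : 0 ≤ β * y := mul_nonneg hβ0.le hy0
  have h2 : β * y ≤ β * 1 := mul_le_mul_of_nonneg_left hy1 hβ0.le
  refine ⟨i, hi, ?_, ?_⟩ <;> unfold phi <;> rw [mul_div_assoc] <;> linarith

private lemma cyl_unique (hN : 0 < N) (hβ0 : 0 < β) (hβ1 : β < 1 / (2 * N + 1))
    {i j : ℕ} {x : ℝ}
    (hi1 : (i:ℝ) * ((1 - β)/N) ≤ x) (hi2 : x ≤ (i:ℝ) * ((1 - β)/N) + β)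
    (hj1 : (j:ℝ) * ((1 - β)/N) ≤ x) (hj2 : x ≤ (j:ℝ) * ((1 - β)/N) + β) :
    i = j := by
  obtain ⟨hb1, h2β, -⟩ := beta_facts hN hβ0 hβ1
  have hA0 : 0 < (1 - β)/N := by linarith
  by_contra hne
  rcases Nat.lt_or_ge i j with h | h
  · have hij : (i:ℝ) + 1 ≤ j := by exact_mod_cast h
    have hprod : ((i:ℝ) + 1) * ((1 - β)/N) ≤ (j:ℝ) * ((1 - β)/N) :=
      mul_le_mul_of_nonneg_right hij hA0.le
    nlinarith
  · have h' : j < i := by omega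
    have hij : (j:ℝ) + 1 ≤ i := by exact_mod_cast h'
    have hprod : ((j:ℝ) + 1) * ((1 - β)/N) ≤ (i:ℝ) * ((1 - β)/N) :=
      mul_le_mul_of_nonneg_right hij hA0.le
    nlinarith

private lemma Gamma_cyl_peel (hN : 0 < N) (hβ0 : 0 < β) (hβ1 : β < 1 / (2 * N + 1))
    {x : ℝ} {i : ℕ} (hx : x ∈ Gamma N β) (hi : i ≤ N)
    (h1 : (i:ℝ) * ((1 - β)/N) ≤ x) (h2 : x ≤ (i:ℝ) * ((1 - β)/N) + β) :
    ∃ y ∈ Gamma N β, x = β * y + (i:ℝ) * ((1 - β)/N) := by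
  obtain ⟨hb1, h2β, -⟩ := beta_facts hN hβ0 hβ1
  obtain ⟨i', hi', y, hy, rfl⟩ := Gamma_peel hβ0 hb1 hx
  obtain ⟨hy0, hy1⟩ := Gamma_bounds hN hβ0 hb1 hy
  have hm1 : 0 ≤ β * y := mul_nonneg hβ0.le hy0
  have hm2 : β * y ≤ β * 1 := mul_le_mul_of_nonneg_left hy1 hβ0.le
  have hphi : phi N β i' y = β * y + (i':ℝ) * ((1-β)/N) := by unfold phi; rw [mul_div_assoc]
  have heq : i' = i := by
    refine cyl_unique hN hβ0 hβ1 (x := phi N β i' y) ?_ ?_ h1 h2 <;> rw [hphi] <;> linarith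
  subst heq
  exact ⟨y, hy, hphi⟩

private lemma Gamma_approx (hN : 0 < N) (hβ0 : 0 < β) (hβ1 : β < 1 / (2 * N + 1)) :
    ∀ n : ℕ, ∀ x : ℝ, 0 ≤ x → x ≤ 1 →
      ∃ y ∈ Gamma N β, |x - y| ≤ max (((1 - β)/N - β)/2) (β ^ n) := by
  obtain ⟨hb1, h2β, hNA⟩ := beta_facts hN hβ0 hβ1
  have hA0 : 0 < (1 - β)/N := by linarith
  have hG0 : 0 < ((1 - β)/N - β)/2 := by linarith
  intro n
  induction n with
  | zero =>
    intro x hx0 hx1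
    exact ⟨0, zero_mem_Gamma, by
      rw [pow_zero, sub_zero, abs_of_nonneg hx0]
      exact le_max_of_le_right hx1⟩
  | succ n ih =>
    intro x hx0 hx1
    by_cases hc : ∃ i : ℕ, i ≤ N ∧ (i:ℝ) * ((1 - β)/N) ≤ x ∧ x ≤ (i:ℝ) * ((1 - β)/N) + β
    · obtain ⟨i, hi, hc1, hc2⟩ := hc
      have hβne : β ≠ 0 := ne_of_gt hβ0
      set x' := (x - i * ((1 - β)/N))/β with hx'
      have hx'0 : 0 ≤ x' := div_nonneg (by linarith) hβ0.le
      have hx'1 : x' ≤ 1 := by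
        rw [hx', div_le_one hβ0]; linarith
      obtain ⟨y', hy', hyx'⟩ := ih x' hx'0 hx'1
      refine ⟨phi N β i y', phi_mem hβ0 hb1 hi hy', ?_⟩
      have hxeq : x = β * x' + i * ((1 - β)/N) := by
        rw [hx', mul_comm β _, div_mul_cancel₀ _ hβne]; ring
      have hd : x - phi N β i y' = β * (x' - y') := by
        unfold phi; rw [mul_div_assoc, hxeq]; ring
      rw [hd, abs_mul, abs_of_pos hβ0]
      have hstep : β * max (((1 - β)/N - β)/2) (β^n) ≤ max (((1 - β)/N - β)/2) (β^(n+1)) := by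
        rcases max_cases (((1 - β)/N - β)/2) (β^n) with ⟨heq, -⟩ | ⟨heq, -⟩ <;> rw [heq]
        · refine le_max_of_le_left ?_
          have := mul_le_mul_of_nonneg_right hb1.le hG0.le
          linarith [mul_le_mul_of_nonneg_right hb1.le hG0.le]
        · exact le_max_of_le_right (le_of_eq (by rw [pow_succ]; ring))
      calc β * |x' - y'| ≤ β * max (((1 - β)/N - β)/2) (β^n) :=
            mul_le_mul_of_nonneg_left hyx' hβ0.le
        _ ≤ _ := hstep
    · push_neg at hc
      set i := Nat.floor (x / ((1 - β)/N)) with hifl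
      have hfl : (i:ℝ) ≤ x / ((1 - β)/N) := Nat.floor_le (by positivity)
      have hi1 : (i:ℝ) * ((1 - β)/N) ≤ x := (le_div_iff₀ hA0).mp hfl
      have hi2 : x < ((i:ℝ) + 1) * ((1 - β)/N) := by
        have h := Nat.lt_floor_add_one (x / ((1 - β)/N))
        rw [div_lt_iff₀ hA0] at h
        exact_mod_cast h
      have hiN : i ≤ N := by
        have h1 : (i:ℝ) * ((1 - β)/N) < ((N:ℝ) + 1) * ((1 - β)/N) := by nlinarith
        have h2 : (i:ℝ) < (N:ℝ) + 1 := lt_of_mul_lt_mul_right h1 hA0.le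
        have h3 : i < N + 1 := by exact_mod_cast h2
        omega
      have hgap : (i:ℝ) * ((1 - β)/N) + β < x := hc i hiN hi1
      by_cases hhalf : x ≤ (i:ℝ) * ((1 - β)/N) + β + ((1 - β)/N - β)/2
      · refine ⟨phi N β i 1, phi_mem hβ0 hb1 hiN (one_mem_Gamma hN hβ0 hb1), ?_⟩
        have hphi : phi N β i 1 = (i:ℝ) * ((1 - β)/N) + β := by
          unfold phi; rw [mul_div_assoc]; ring
        rw [hphi, abs_of_nonneg (by linarith)]
        exact le_max_of_le_left (by linarith)
      · push_neg at hhalf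
        have hiNe : i ≠ N := by
          intro heq
          rw [heq] at hgap
          nlinarith
        have hiN' : i + 1 ≤ N := by omega
        refine ⟨phi N β (i+1) 0, phi_mem hβ0 hb1 hiN' zero_mem_Gamma, ?_⟩
        have hphi : phi N β (i+1) 0 = ((i:ℝ) + 1) * ((1 - β)/N) := by
          unfold phi; rw [mul_div_assoc]; push_cast; ring
        rw [hphi, abs_of_nonpos (by linarith)]
        exact le_max_of_le_left (by linarith)

private lemma no_middle (hN : 0 < N) (hβ0 : 0 < β) (hβ1 : β < 1 / (2 * N + 1)) :
    ∀ n : ℕ, ∀ lam c : ℝ, β^(n+1) < lam → lam < β^n →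
      ¬ (∀ x ∈ Gamma N β, lam * x + c ∈ Gamma N β) := by
  obtain ⟨hb1, h2β, hNA⟩ := beta_facts hN hβ0 hβ1
  have hA0 : 0 < (1 - β)/N := by linarith
  have hG0 : 0 < ((1 - β)/N - β)/2 := by linarith
  intro n
  induction n with
  | zero =>
    intro lam c hlow hhigh h
    rw [pow_zero] at hhigh
    rw [pow_one] at hlow
    have hlam0 : 0 < lam := lt_trans hβ0 hlow
    have hcmem : c ∈ Gamma N β := by
      have := h 0 zero_mem_Gamma; simpa using this
    have hclam : lam + c ∈ Gamma N β := by
      have := h 1 (one_mem_Gamma hN hβ0 hb1); rw [mul_one] at this; exact this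
    obtain ⟨i1, hi1N, hi11, hi12⟩ := mem_cyl hN hβ0 hb1 hcmem
    obtain ⟨i2, hi2N, hi21, hi22⟩ := mem_cyl hN hβ0 hb1 hclam
    have hlt : i1 < i2 := by
      rcases Nat.lt_or_ge i1 i2 with h' | h'
      · exact h'
      · exfalso
        rcases Nat.eq_or_lt_of_le h' with h'' | h''
        · subst h''; linarith
        · have hij : (i2:ℝ) + 1 ≤ i1 := by exact_mod_cast h''
          have hprod : ((i2:ℝ) + 1) * ((1 - β)/N) ≤ (i1:ℝ) * ((1 - β)/N) :=
            mul_le_mul_of_nonneg_right hij hA0.le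
          linarith
    have hlt' : (i1:ℝ) + 1 ≤ i2 := by exact_mod_cast hlt
    have hprod : ((i1:ℝ) + 1) * ((1 - β)/N) ≤ (i2:ℝ) * ((1 - β)/N) :=
      mul_le_mul_of_nonneg_right hlt' hA0.le
    set mid := (i1:ℝ) * ((1 - β)/N) + β + ((1 - β)/N - β)/2 with hmid
    set x0 := (mid - c)/lam with hx0
    have hx00 : 0 ≤ x0 := div_nonneg (by rw [hmid]; linarith) hlam0.le
    have hx01 : x0 ≤ 1 := by
      rw [hx0, div_le_one hlam0, hmid]
      nlinarith
    obtain ⟨n0, hn0⟩ := exists_pow_lt_of_lt_one hG0 hb1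
    obtain ⟨y, hy, hxy⟩ := Gamma_approx hN hβ0 hβ1 n0 x0 hx00 hx01
    have hxy' : |x0 - y| ≤ ((1 - β)/N - β)/2 := by
      rcases max_cases (((1 - β)/N - β)/2) (β^n0) with ⟨heq, -⟩ | ⟨heq, hle⟩
      · rwa [heq] at hxy
      · rw [heq] at hxy; linarith
    have hz := h y hy
    have hzmid : |lam * y + c - mid| < ((1 - β)/N - β)/2 := by
      have he : lam * y + c - mid = lam * (y - x0) := by
        rw [hx0, mul_sub, mul_div_cancel₀ _ (ne_of_gt hlam0)]; ring
      rw [he, abs_mul, abs_of_pos hlam0]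
      have h5 : |y - x0| ≤ ((1 - β)/N - β)/2 := by rwa [abs_sub_comm] at hxy'
      have h6 : lam * |y - x0| ≤ lam * (((1 - β)/N - β)/2) :=
        mul_le_mul_of_nonneg_left h5 hlam0.le
      have h7 : lam * (((1 - β)/N - β)/2) < 1 * (((1 - β)/N - β)/2) :=
        mul_lt_mul_of_pos_right hhigh hG0
      linarith
    have habs := abs_lt.mp hzmid
    have hzl : (i1:ℝ) * ((1 - β)/N) + β < lam * y + c := by
      rw [hmid] at habs; linarith [habs.1]
    have hzr : lam * y + c < ((i1:ℝ)+1) * ((1 - β)/N) := by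
      rw [hmid] at habs
      have h8 := habs.2
      nlinarith
    obtain ⟨j, hjN, hj1, hj2⟩ := mem_cyl hN hβ0 hb1 hz
    rcases Nat.lt_or_ge j (i1+1) with hj | hj
    · have hji : (j:ℝ) ≤ i1 := by exact_mod_cast Nat.lt_succ_iff.mp hj
      have hp2 : (j:ℝ) * ((1 - β)/N) ≤ (i1:ℝ) * ((1 - β)/N) :=
        mul_le_mul_of_nonneg_right hji hA0.le
      linarith
    · have hji : (i1:ℝ) + 1 ≤ j := by exact_mod_cast hj
      have hp2 : ((i1:ℝ)+1) * ((1 - β)/N) ≤ (j:ℝ) * ((1 - β)/N) :=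
        mul_le_mul_of_nonneg_right hji hA0.le
      linarith
  | succ n ih =>
    intro lam c hlow hhigh h
    have hlam0 : 0 < lam := lt_trans (pow_pos hβ0 (n+2)) hlow
    have hbn : β^(n+1) ≤ β := by
      have h1 : β^n ≤ 1 := pow_le_one₀ hβ0.le hb1.le
      have h2 : β^n * β ≤ 1 * β := mul_le_mul_of_nonneg_right h1 hβ0.le
      rw [pow_succ]; linarith
    have hlamβ : lam < β := lt_of_lt_of_le hhigh hbn
    have hcmem : c ∈ Gamma N β := by
      have := h 0 zero_mem_Gamma; simpa using this
    have hclam : lam + c ∈ Gamma N β := by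
      have := h 1 (one_mem_Gamma hN hβ0 hb1); rw [mul_one] at this; exact this
    obtain ⟨i1, hi1N, hi11, hi12⟩ := mem_cyl hN hβ0 hb1 hcmem
    obtain ⟨i2, hi2N, hi21, hi22⟩ := mem_cyl hN hβ0 hb1 hclam
    have heq : i1 = i2 := by
      by_contra hne
      rcases Nat.lt_or_ge i1 i2 with h' | h'
      · have hij : (i1:ℝ) + 1 ≤ i2 := by exact_mod_cast h'
        have hprod : ((i1:ℝ) + 1) * ((1 - β)/N) ≤ (i2:ℝ) * ((1 - β)/N) :=
          mul_le_mul_of_nonneg_right hij hA0.le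
        linarith
      · have h'' : i2 < i1 := by omega
        have hij : (i2:ℝ) + 1 ≤ i1 := by exact_mod_cast h''
        have hprod : ((i2:ℝ) + 1) * ((1 - β)/N) ≤ (i1:ℝ) * ((1 - β)/N) :=
          mul_le_mul_of_nonneg_right hij hA0.le
        linarith
    subst heq
    have hβne : β ≠ 0 := ne_of_gt hβ0
    have hkey : ∀ x ∈ Gamma N β, (lam/β) * x + (c - i1*((1 - β)/N))/β ∈ Gamma N β := by
      intro x hx
      obtain ⟨hx0, hx1⟩ := Gamma_bounds hN hβ0 hb1 hx
      have hz := h x hx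
      have hm1 : 0 ≤ lam * x := mul_nonneg hlam0.le hx0
      have hm2 : lam * x ≤ lam * 1 := mul_le_mul_of_nonneg_left hx1 hlam0.le
      have hzb1 : (i1:ℝ) * ((1 - β)/N) ≤ lam*x + c := by linarith
      have hzb2 : lam*x + c ≤ (i1:ℝ) * ((1 - β)/N) + β := by linarith
      obtain ⟨y, hy, hyeq⟩ := Gamma_cyl_peel hN hβ0 hβ1 hz hi1N hzb1 hzb2
      have hy' : y = (lam*x + c - i1*((1 - β)/N))/β := by
        rw [eq_div_iff hβne]; linarith [hyeq]
      have : (lam/β) * x + (c - i1*((1 - β)/N))/β = y := by rw [hy']; ring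
      rwa [this]
    refine ih (lam/β) ((c - i1*((1 - β)/N))/β) ?_ ?_ hkey
    · rw [lt_div_iff₀ hβ0, ← pow_succ]; exact hlow
    · rw [div_lt_iff₀ hβ0, ← pow_succ]; exact hhigh

private lemma exists_pow_interval (hβ0 : 0 < β) (hb1 : β < 1) {lam : ℝ}
    (h0 : 0 < lam) (h1 : lam < 1) :
    ∃ n : ℕ, β^(n+1) < lam ∧ lam ≤ β^n := by
  classical
  have hS : ∃ n, β^n < lam := exists_pow_lt_of_lt_one h0 hb1
  have hn1 : β ^ (Nat.find hS) < lam := Nat.find_spec hS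
  have hn1pos : Nat.find hS ≠ 0 := by
    intro hzero
    rw [hzero, pow_zero] at hn1
    linarith
  obtain ⟨n, hn⟩ : ∃ n, Nat.find hS = n + 1 := ⟨Nat.find hS - 1, by omega⟩
  refine ⟨n, by rw [← hn]; exact hn1, ?_⟩
  have := Nat.find_min hS (m := n) (by omega)
  linarith [not_lt.mp this]

private lemma claimC_pos (hN : 0 < N) (hβ0 : 0 < β) (hβ1 : β < 1 / (2 * N + 1))
    {lam c : ℝ} (h0 : 0 < lam) (h1 : lam < 1)
    (h : ∀ x ∈ Gamma N β, lam * x + c ∈ Gamma N β) :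
    ∃ q : ℕ, 1 ≤ q ∧ lam = β ^ q := by
  obtain ⟨hb1, -, -⟩ := beta_facts hN hβ0 hβ1
  obtain ⟨n, hlow, hhigh⟩ := exists_pow_interval hβ0 hb1 h0 h1
  rcases eq_or_lt_of_le hhigh with heq | hlt
  · refine ⟨n, ?_, heq⟩
    rcases Nat.eq_zero_or_pos n with h' | h'
    · exfalso; rw [h', pow_zero] at heq; linarith
    · exact h'
  · exact absurd h (no_middle hN hβ0 hβ1 n lam c hlow hlt)

private lemma claimC_abs (hN : 0 < N) (hβ0 : 0 < β) (hβ1 : β < 1 / (2 * N + 1))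
    {lam c : ℝ} (h0 : lam ≠ 0) (h1 : |lam| < 1)
    (h : ∀ x ∈ Gamma N β, lam * x + c ∈ Gamma N β) :
    ∃ q : ℕ, 1 ≤ q ∧ |lam| = β ^ q := by
  obtain ⟨hb1, -, -⟩ := beta_facts hN hβ0 hβ1
  rcases lt_or_gt_of_ne h0 with hneg | hpos
  · have habs : |lam| = -lam := abs_of_neg hneg
    have h' : ∀ x ∈ Gamma N β, |lam| * x + (c + lam) ∈ Gamma N β := by
      intro x hx
      have h1x := one_sub_mem hN hβ0 hb1 hx
      have := h _ h1x
      have heq : lam * (1 - x) + c = |lam| * x + (c + lam) := by rw [habs]; ring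
      rwa [heq] at this
    exact claimC_pos hN hβ0 hβ1 (abs_pos.mpr h0) h1 h'
  · rw [abs_of_pos hpos] at h1 ⊢
    exact claimC_pos hN hβ0 hβ1 hpos h1 h


private lemma main_core (hN : 0 < N) (hβ0 : 0 < β) (hβ1 : β < 1 / (2 * N + 1))
    {L ε : ℝ} (hL1 : 1 ≤ L) (hε0 : 0 < ε) (hε1 : ε ≤ 1)
    {X : Set ℝ} (hGX : Gamma N β ⊆ X) (hXbd : ∀ x ∈ X, x ≤ L)
    (hloc : ∀ x ∈ X, x < ε → x ∈ Gamma N β)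
    {ρ : ℝ} (hρ0 : 0 < ρ) (hρ1 : ρ < 1) (hρX : ∀ x ∈ X, ρ * x ∈ X)
    {r b : ℝ} (hr0 : 0 < |r|) (hr1 : |r| < 1) (hf : ∀ x ∈ X, r * x + b ∈ X) :
    ∃ q : ℕ, 1 ≤ q ∧ |r| = β ^ q := by
  obtain ⟨hb1, h2β, hNA⟩ := beta_facts hN hβ0 hβ1
  have hrne : r ≠ 0 := fun h => by rw [h, abs_zero] at hr0; exact lt_irrefl _ hr0
  have hL0 : (0:ℝ) < L := lt_of_lt_of_le one_pos hL1
  obtain ⟨n, hn⟩ := exists_pow_lt_of_lt_one (div_pos hε0 hL0) hρ1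
  have hQ0 : 0 < ρ^n := pow_pos hρ0 n
  have hQL : ρ^n * L < ε := by
    have := mul_lt_mul_of_pos_right hn hL0
    rwa [div_mul_cancel₀ ε (ne_of_gt hL0)] at this
  have hQ1 : ρ^n < 1 := by
    have h1 : ε / L ≤ 1 := (div_le_one hL0).mpr (le_trans hε1 hL1)
    linarith
  have hpowX : ∀ k : ℕ, ∀ x ∈ X, ρ^k * x ∈ X := by
    intro k
    induction k with
    | zero => intro x hx; simpa using hx
    | succ k ih =>
      intro x hx
      have h1 := hρX _ (ih x hx)
      have he : ρ * (ρ^k * x) = ρ^(k+1) * x := by rw [pow_succ]; ring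
      rwa [he] at h1
  have hQΓ : ∀ x ∈ X, ρ^n * x ∈ Gamma N β := by
    intro x hx
    refine hloc _ (hpowX n x hx) ?_
    have h2 : ρ^n * x ≤ ρ^n * L := mul_le_mul_of_nonneg_left (hXbd x hx) hQ0.le
    linarith
  have h1 : ∀ x ∈ Gamma N β, ρ^n * x + 0 ∈ Gamma N β := fun x hx => by
    rw [add_zero]; exact hQΓ x (hGX hx)
  obtain ⟨q, hq1, hQq⟩ := claimC_pos hN hβ0 hβ1 hQ0 hQ1 h1
  have h2 : ∀ x ∈ Gamma N β, (ρ^n * r) * x + ρ^n * b ∈ Gamma N β := by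
    intro x hx
    have h3 := hQΓ _ (hf x (hGX hx))
    have he : ρ^n * (r*x + b) = (ρ^n * r)*x + ρ^n*b := by ring
    rwa [he] at h3
  have hQrne : ρ^n * r ≠ 0 := mul_ne_zero (ne_of_gt hQ0) hrne
  have hQr1 : |ρ^n * r| < 1 := by
    rw [abs_mul, abs_of_pos hQ0]
    have h4 : ρ^n * |r| ≤ ρ^n * 1 := mul_le_mul_of_nonneg_left hr1.le hQ0.le
    linarith
  obtain ⟨q', hq'1, hQr⟩ := claimC_abs hN hβ0 hβ1 hQrne hQr1 h2
  have hkey : β^q * |r| = β^q' := by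
    rw [← hQr, abs_mul, abs_of_pos hQ0, hQq]
  have hβq0 : (0:ℝ) < β^q := pow_pos hβ0 q
  have hqlt : q < q' := by
    by_contra hle
    push_neg at hle
    have hpow : β^q ≤ β^q' := pow_le_pow_of_le_one hβ0.le hb1.le hle
    have h5 : β^q * |r| < β^q * 1 := mul_lt_mul_of_pos_left hr1 hβq0
    linarith
  refine ⟨q' - q, by omega, ?_⟩
  have hsplit : β^(q'-q) * β^q = β^q' := by rw [← pow_add]; congr 1; omega
  have h6 : β^(q'-q) * β^q = |r| * β^q := by rw [hsplit, ← hkey]; ring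
  exact (mul_right_cancel₀ (ne_of_gt hβq0) h6).symm


end AuxProofs

/-- Suppose `0 < β < 1/(2N+1)` and `Γ_t = ⋃_{j=0}^m (Γ + t_j)` is a self-similar set,
where `0 = t_0 < ⋯ < t_m`. If `r·Γ_t + b ⊆ Γ_t` with `0 < |r| < 1`, then `|r| = β^q` for
some `q ∈ ℤ_+`. -/
theorem stmt14 (N : ℕ) (hN : 0 < N) (β : ℝ) (hβ0 : 0 < β) (hβ1 : β < 1 / (2 * N + 1))
    (m : ℕ) (t : Fin (m + 1) → ℝ) (ht0 : t 0 = 0) (hmono : StrictMono t)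
    (hss : IsSelfSimilar (GammaT N β t))
    (r b : ℝ) (hr0 : 0 < |r|) (hr1 : |r| < 1)
    (h : ∀ x ∈ GammaT N β t, r * x + b ∈ GammaT N β t) :
    ∃ q : ℕ, 1 ≤ q ∧ |r| = β ^ q := by
  classical
  obtain ⟨hb1, h2β, hNA⟩ := beta_facts hN hβ0 hβ1
  set E := GammaT N β t with hEdef
  set L : ℝ := t (Fin.last m) + 1 with hLdef
  have htlast0 : 0 ≤ t (Fin.last m) := by
    rw [← ht0]; exact hmono.monotone (Fin.zero_le _)
  have hL1 : (1:ℝ) ≤ L := by rw [hLdef]; linarith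
  have hmemE : ∀ (j : Fin (m+1)) (g : ℝ), g ∈ Gamma N β → g + t j ∈ E := by
    intro j g hg
    exact Set.mem_iUnion.mpr ⟨j, ⟨g, hg, rfl⟩⟩
  have hEelim : ∀ x ∈ E, ∃ j, ∃ g ∈ Gamma N β, x = g + t j := by
    intro x hx
    obtain ⟨j, hj⟩ := Set.mem_iUnion.mp hx
    obtain ⟨g, hg, he⟩ := hj
    exact ⟨j, g, hg, he.symm⟩
  have hGE : Gamma N β ⊆ E := by
    intro g hg
    have := hmemE 0 g hg
    rwa [ht0, add_zero] at this
  have hE0 : (0:ℝ) ∈ E := hGE zero_mem_Gamma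
  have hEL : L ∈ E := by
    have := hmemE (Fin.last m) 1 (one_mem_Gamma hN hβ0 hb1)
    rwa [hLdef, add_comm]
  have hEbd : ∀ x ∈ E, 0 ≤ x ∧ x ≤ L := by
    intro x hx
    obtain ⟨j, g, hg, rfl⟩ := hEelim x hx
    obtain ⟨hg0, hg1⟩ := Gamma_bounds hN hβ0 hb1 hg
    have htj0 : 0 ≤ t j := by rw [← ht0]; exact hmono.monotone (Fin.zero_le _)
    have htjl : t j ≤ t (Fin.last m) := hmono.monotone (Fin.le_last _)
    constructor
    · linarith
    · rw [hLdef]; linarith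
  -- epsilon
  obtain ⟨ε, hε0, hε1, hεlow, hεhigh⟩ :
      ∃ ε : ℝ, 0 < ε ∧ ε ≤ 1 ∧ (∀ j : Fin (m+1), j ≠ 0 → ε ≤ t j) ∧
        (∀ j : Fin (m+1), j ≠ Fin.last m → ε ≤ t (Fin.last m) - t j) := by
    have hpos1 : ∀ j : Fin (m+1), j ≠ 0 → 0 < t j := by
      intro j hj; rw [← ht0]; exact hmono (Fin.pos_of_ne_zero hj)
    have hpos2 : ∀ j : Fin (m+1), j ≠ Fin.last m → 0 < t (Fin.last m) - t j := by
      intro j hj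
      have := hmono (lt_of_le_of_ne (Fin.le_last j) hj)
      linarith
    set g : Fin (m+1) → ℝ := fun j =>
      min (if j = 0 then 1 else t j) (if j = Fin.last m then 1 else t (Fin.last m) - t j)
      with hgdef
    have hne : (Finset.univ : Finset (Fin (m+1))).Nonempty := Finset.univ_nonempty
    refine ⟨min 1 (Finset.univ.inf' hne g), ?_, min_le_left _ _, ?_, ?_⟩
    · refine lt_min one_pos ?_
      rw [Finset.lt_inf'_iff]
      intro j _
      refine lt_min ?_ ?_
      · split_ifs with hj
        · exact one_pos
        · exact hpos1 j hj
      · split_ifs with hj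
        · exact one_pos
        · exact hpos2 j hj
    · intro j hj
      refine le_trans (min_le_right _ _) (le_trans (Finset.inf'_le g (Finset.mem_univ j)) ?_)
      refine le_trans (min_le_left _ _) ?_
      exact le_of_eq (if_neg hj)
    · intro j hj
      refine le_trans (min_le_right _ _) (le_trans (Finset.inf'_le g (Finset.mem_univ j)) ?_)
      refine le_trans (min_le_right _ _) ?_
      exact le_of_eq (if_neg hj)
  have hlocE : ∀ x ∈ E, x < ε → x ∈ Gamma N β := by
    intro x hx hxε
    obtain ⟨j, g, hg, rfl⟩ := hEelim _ hx
    by_cases hj : j = 0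
    · subst hj
      rw [ht0, add_zero] at *
      exact hg
    · exfalso
      have h5 := hεlow j hj
      have hg0 := (Gamma_bounds hN hβ0 hb1 hg).1
      linarith
  have hlocEhat : ∀ x ∈ E, L - x < ε → L - x ∈ Gamma N β := by
    intro x hx hxε
    obtain ⟨j, g, hg, rfl⟩ := hEelim _ hx
    obtain ⟨hg0, hg1⟩ := Gamma_bounds hN hβ0 hb1 hg
    by_cases hj : j = Fin.last m
    · subst hj
      have he : L - (g + t (Fin.last m)) = 1 - g := by rw [hLdef]; ring
      rw [he]
      exact one_sub_mem hN hβ0 hb1 hg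
    · exfalso
      have h5 := hεhigh j hj
      have he : L - (g + t j) = (t (Fin.last m) - t j) + (1 - g) := by rw [hLdef]; ring
      rw [he] at hxε
      linarith
  obtain ⟨hnonempty, hcomp, F, hF, hEq⟩ := hss
  have hsub : ∀ p ∈ F, ∀ x ∈ E, p.1 * x + p.2 ∈ E := by
    intro p hp x hx
    have h5 : p.1 * x + p.2 ∈ ⋃ p ∈ F, (fun x => p.1 * x + p.2) '' E :=
      Set.mem_biUnion hp ⟨x, hx, rfl⟩
    rwa [← hEq] at h5
  obtain ⟨p, hp, y0, hy0, hpy0⟩ : ∃ p ∈ F, ∃ y ∈ E, p.1 * y + p.2 = 0 := by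
    have h0 : (0:ℝ) ∈ ⋃ p ∈ F, (fun x => p.1*x + p.2) '' E := by rw [← hEq]; exact hE0
    obtain ⟨p, hp, himg⟩ := Set.mem_iUnion₂.mp h0
    obtain ⟨z, hz, hze⟩ := himg
    exact ⟨p, hp, z, hz, hze⟩
  obtain ⟨p', hp', y1, hy1, hpy1⟩ : ∃ p ∈ F, ∃ y ∈ E, p.1 * y + p.2 = L := by
    have h0 : L ∈ ⋃ p ∈ F, (fun x => p.1*x + p.2) '' E := by rw [← hEq]; exact hEL
    obtain ⟨p, hp, himg⟩ := Set.mem_iUnion₂.mp h0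
    obtain ⟨z, hz, hze⟩ := himg
    exact ⟨p, hp, z, hz, hze⟩
  obtain ⟨hp0, hp1⟩ := hF p hp
  obtain ⟨hp'0, hp'1⟩ := hF p' hp'
  have hpne : p.1 ≠ 0 := fun h' => by rw [h', abs_zero] at hp0; exact lt_irrefl _ hp0
  have hp'ne : p'.1 ≠ 0 := fun h' => by rw [h', abs_zero] at hp'0; exact lt_irrefl _ hp'0
  rcases lt_or_gt_of_ne hpne with hαneg | hαpos
  · -- p.1 < 0 : the piece at 0 sends L to 0
    have hAL : p.1 * L + p.2 = 0 := by
      have h1 : 0 ≤ p.1 * L + p.2 := (hEbd _ (hsub p hp L hEL)).1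
      have hy0L : y0 ≤ L := (hEbd _ hy0).2
      have h2 : p.1 * L ≤ p.1 * y0 := mul_le_mul_of_nonpos_left hy0L hαneg.le
      linarith
    rcases lt_or_gt_of_ne hp'ne with hδneg | hδpos
    · -- both negative: compose, fix 0, X = E
      have hd : p'.2 = L := by
        have h1 : p'.2 ≤ L := by
          have := (hEbd _ (hsub p' hp' 0 hE0)).2
          simpa using this
        have hy10 : 0 ≤ y1 := (hEbd _ hy1).1
        have h2 : 0 ≤ (-p'.1) * y1 := mul_nonneg (by linarith) hy10
        nlinarith
      have hρ0 : 0 < p.1 * p'.1 := mul_pos_of_neg_of_neg hαneg hδneg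
      have hρ1 : p.1 * p'.1 < 1 := by
        have h2 : |p.1| * |p'.1| < 1 * 1 := mul_lt_mul'' hp1 hp'1 (abs_nonneg _) (abs_nonneg _)
        rw [← abs_mul] at h2
        rw [abs_of_pos hρ0] at h2
        linarith
      have hρX : ∀ x ∈ E, (p.1 * p'.1) * x ∈ E := by
        intro x hx
        have h1 := hsub p' hp' x hx
        have h2 := hsub p hp _ h1
        have he : p.1 * (p'.1 * x + p'.2) + p.2 = (p.1 * p'.1) * x := by
          rw [hd]; linear_combination hAL
        rwa [he] at h2
      exact main_core hN hβ0 hβ1 hL1 hε0 hε1 hGE (fun x hx => (hEbd x hx).2) hlocE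
        hρ0 hρ1 hρX hr0 hr1 h
    · -- p.1 < 0, p'.1 > 0 : p' fixes L; reflect, X = L - E
      have hBL : p'.1 * L + p'.2 = L := by
        have h1 : p'.1 * L + p'.2 ≤ L := (hEbd _ (hsub p' hp' L hEL)).2
        have hy1L : y1 ≤ L := (hEbd _ hy1).2
        have h2 : p'.1 * y1 ≤ p'.1 * L := mul_le_mul_of_nonneg_left hy1L hδpos.le
        linarith
      have hGX : Gamma N β ⊆ (fun x => L - x) '' E := by
        intro g hg
        refine ⟨(1 - g) + t (Fin.last m), hmemE _ _ (one_sub_mem hN hβ0 hb1 hg), ?_⟩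
        show L - ((1 - g) + t (Fin.last m)) = g
        rw [hLdef]; ring
      have hXbd : ∀ x ∈ (fun x => L - x) '' E, x ≤ L := by
        rintro x ⟨z, hz, rfl⟩
        have := (hEbd z hz).1
        show L - z ≤ L
        linarith
      have hlocX : ∀ x ∈ (fun x => L - x) '' E, x < ε → x ∈ Gamma N β := by
        rintro x ⟨z, hz, rfl⟩ hxe
        exact hlocEhat z hz hxe
      have hρX : ∀ x ∈ (fun x => L - x) '' E, p'.1 * x ∈ (fun x => L - x) '' E := by
        rintro x ⟨z, hz, rfl⟩
        refine ⟨p'.1 * z + p'.2, hsub p' hp' z hz, ?_⟩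
        show L - (p'.1 * z + p'.2) = p'.1 * (L - z)
        linear_combination -hBL
      have hfX : ∀ x ∈ (fun x => L - x) '' E, r * x + (L - r * L - b) ∈ (fun x => L - x) '' E := by
        rintro x ⟨z, hz, rfl⟩
        refine ⟨r * z + b, h z hz, ?_⟩
        show L - (r * z + b) = r * (L - z) + (L - r * L - b)
        ring
      exact main_core hN hβ0 hβ1 hL1 hε0 hε1 hGX hXbd hlocX hδpos
        (by rwa [abs_of_pos hδpos] at hp'1) hρX hr0 hr1 hfX
  · -- p.1 > 0 : piece at 0 fixes 0, X = E
    have hp2 : p.2 = 0 := by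
      have h1 : 0 ≤ p.2 := by
        have := (hEbd _ (hsub p hp 0 hE0)).1
        simpa using this
      have hy00 : 0 ≤ y0 := (hEbd _ hy0).1
      have h2 : 0 ≤ p.1 * y0 := mul_nonneg hαpos.le hy00
      linarith
    have hρX : ∀ x ∈ E, p.1 * x ∈ E := by
      intro x hx
      have h1 := hsub p hp x hx
      rwa [hp2, add_zero] at h1
    exact main_core hN hβ0 hβ1 hL1 hε0 hε1 hGE (fun x hx => (hEbd x hx).2) hlocE
      hαpos (by rwa [abs_of_pos hαpos] at hp1) hρX hr0 hr1 h



end HSCantor
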